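/- arXiv:2502.01266 — 14 statements merged into one kernel-verified Lean document; each statement's English description precedes it below -/
import Mathlib

section
/- In a skew orthomodular poset, if a ≤ b and the upper cone U(a, b') = {1}, then a = b. -/
/-- In a skew orthomodular poset, if a ≤ b and U(a, b') = {1}, then a = b. -/
theorem skew_omp_upper_cone_one {P : Type*} [PartialOrder P] [BoundedOrder P]
    (f : P → P)
    (hinv : ∀ x, f (f x) = x)
    (hanti : ∀ x y : P, x ≤ y → f y ≤ f x)
    (hinf : ∀ x : P, lowerBounds {x, f x} = {(⊥ : P)})
    (hsup : ∀ x : P, upperBounds {x, f x} = {(⊤ : P)})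
    (hskew : ∀ x y : P, x ≤ y →
      upperBounds {y} = upperBounds (insert x (lowerBounds {y, f x})))
    (a b : P) (hab : a ≤ b)
    (h : upperBounds {a, f b} = {(⊤ : P)}) :
    a = b := by
  -- f ⊤ = ⊥
  have hftop : f ⊤ = ⊥ := by
    have : f ⊤ ∈ lowerBounds {(⊤ : P), f ⊤} := by
      intro z hz
      rcases hz with rfl | rfl
      · exact le_top
      · exact le_refl _
    rw [hinf ⊤] at this
    exact this
  -- every element of L(b, f a) is ⊥
  have hL : ∀ z ∈ lowerBounds {b, f a}, z = (⊥ : P) := by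
    intro z hz
    have hzb : z ≤ b := hz (by left; rfl)
    have hzfa : z ≤ f a := hz (by right; rfl)
    have h1 : f b ≤ f z := hanti _ _ hzb
    have h2 : a ≤ f z := by
      have := hanti _ _ hzfa
      rwa [hinv] at this
    have hfz : f z ∈ upperBounds {a, f b} := by
      intro w hw
      rcases hw with rfl | rfl
      · exact h2
      · exact h1
    rw [h] at hfz
    have : f z = ⊤ := hfz
    have := congrArg f this
    rw [hinv, hftop] at this
    exact this
  -- a is an upper bound of insert a (lowerBounds {b, f a})
  have ha : a ∈ upperBounds (insert a (lowerBounds {b, f a})) := by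
    intro z hz
    rcases hz with rfl | hz
    · exact le_refl _
    · rw [hL z hz]; exact bot_le
  rw [← hskew a b hab] at ha
  have hba : b ≤ a := ha (by rfl)
  exact le_antisymm hab hba
end

section
/- The two conditions defining a skew orthomodular poset are equivalent: an orthoposet satisfies (x ≤ y implies U(y) = U({x} ∪ L(y, x'))) if and only if it satisfies (x ≤ y implies L(x) = L({y} ∪ U(x, y'))). -/
lemma skew_omp_aux {P : Type*} [PartialOrder P] (f : P → P)
    (hinv : ∀ x, f (f x) = x)
    (hanti : ∀ x y : P, x ≤ y → f y ≤ f x)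
    (h : ∀ x y : P, x ≤ y →
        upperBounds {y} = upperBounds (insert x (lowerBounds {y, f x}))) :
    ∀ x y : P, x ≤ y →
        lowerBounds {x} = lowerBounds (insert y (upperBounds {x, f y})) := by
  have key : ∀ a b : P, a ≤ b ↔ f b ≤ f a := fun a b =>
    ⟨hanti a b, fun hh => by simpa [hinv] using hanti _ _ hh⟩
  intro x y hxy
  have h1 := h (f y) (f x) (hanti x y hxy)
  rw [hinv] at h1
  ext z
  constructor
  · intro hzx
    have hzx' : z ≤ x := hzx rfl
    have hz2 : f z ∈ upperBounds (insert (f y) (lowerBounds {f x, y})) := by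
      rw [← h1]
      intro a ha
      rcases ha with rfl | _
      · exact hanti _ _ hzx'
    intro a ha
    rcases ha with rfl | ha
    · exact (key z a).mpr (hz2 (Set.mem_insert _ _))
    · have hfa : f a ∈ lowerBounds {f x, y} := by
        intro b hb
        rcases hb with rfl | hb
        · exact hanti _ _ (ha (Set.mem_insert _ _))
        · rcases hb with rfl
          have hya : f b ≤ a := ha (Set.mem_insert_of_mem _ rfl)
          have := hanti _ _ hya
          simpa [hinv] using this
      have : f a ≤ f z := hz2 (Set.mem_insert_of_mem _ hfa)
      exact (key z a).mpr this
  · intro hz2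
    intro a ha
    rcases ha with rfl
    have hfz : f z ∈ upperBounds (insert (f y) (lowerBounds {f a, y})) := by
      intro b hb
      rcases hb with rfl | hb
      · exact hanti _ _ (hz2 (Set.mem_insert _ _))
      · have hfb : f b ∈ upperBounds {a, f y} := by
          intro c hc
          rcases hc with rfl | hc
          · have : b ≤ f c := hb (Set.mem_insert _ _)
            have := hanti _ _ this
            simpa [hinv] using this
          · rcases hc with rfl
            exact hanti _ _ (hb (Set.mem_insert_of_mem _ rfl))
        have : z ≤ f b := hz2 (Set.mem_insert_of_mem _ hfb)
        have := hanti _ _ this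
        simpa [hinv] using this
    rw [← h1] at hfz
    have : f a ≤ f z := hfz rfl
    exact (key z a).mpr this

/-- The two conditions defining a skew orthomodular poset are equivalent. -/
theorem skew_omp_conditions_equivalent {P : Type*} [PartialOrder P] [BoundedOrder P]
    (f : P → P)
    (hinv : ∀ x, f (f x) = x)
    (hanti : ∀ x y : P, x ≤ y → f y ≤ f x)
    (hinf : ∀ x : P, lowerBounds {x, f x} = {(⊥ : P)})
    (hsup : ∀ x : P, upperBounds {x, f x} = {(⊤ : P)}) :
    (∀ x y : P, x ≤ y →
        upperBounds {y} = upperBounds (insert x (lowerBounds {y, f x}))) ↔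
    (∀ x y : P, x ≤ y →
        lowerBounds {x} = lowerBounds (insert y (upperBounds {x, f y}))) := by
  constructor
  · exact skew_omp_aux f hinv hanti
  · intro h2
    have := skew_omp_aux (P := Pᵒᵈ) f hinv (fun x y h => hanti y x h)
      (fun x y h => h2 y x h)
    exact fun x y h => this y x h
end

section
/- Let P be an orthoposet in which x ∨ y exists whenever x ≤ y'. Then P is an orthomodular poset (i.e., x ≤ y implies y = x ∨ (y ∧ x')) if and only if P is a skew orthomodular poset (i.e., x ≤ y implies U(y) = U({x} ∪ L(y, x'))). -/
/-- An orthoposet where orthogonal joins exist is orthomodular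
iff it is skew orthomodular. -/
theorem omp_iff_skew_omp {P : Type*} [PartialOrder P] [BoundedOrder P]
    (f : P → P)
    (hinv : ∀ x, f (f x) = x)
    (hanti : ∀ x y : P, x ≤ y → f y ≤ f x)
    (hinf : ∀ x : P, lowerBounds {x, f x} = {(⊥ : P)})
    (hsup : ∀ x : P, upperBounds {x, f x} = {(⊤ : P)})
    (hexists : ∀ x y : P, x ≤ f y → ∃ s, IsLUB {x, y} s) :
    (∀ x y : P, x ≤ y → ∃ m, IsGLB {y, f x} m ∧ IsLUB {x, m} y) ↔
    (∀ x y : P, x ≤ y →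
        upperBounds {y} = upperBounds (insert x (lowerBounds {y, f x}))) := by
  constructor
  · intro h x y hxy
    obtain ⟨m, hglb, hlub⟩ := h x y hxy
    ext u
    constructor
    · intro hu z hz
      have hyu : y ≤ u := hu rfl
      rcases hz with rfl | hz
      · exact le_trans hxy hyu
      · exact le_trans (hz (Set.mem_insert y _)) hyu
    · intro hu z hz
      rcases hz with rfl
      apply hlub.2
      intro w hw
      rcases hw with rfl | hw
      · exact hu (Set.mem_insert w _)
      · rcases hw with rfl
        exact hu (Set.mem_insert_of_mem _ hglb.1)
  · intro h x y hxy
    have hfy : f y ≤ f x := hanti _ _ hxy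
    obtain ⟨s, hs⟩ := hexists (f y) x hfy
    have hfys : f y ≤ s := hs.1 (Set.mem_insert _ _)
    have hxs : x ≤ s := hs.1 (Set.mem_insert_of_mem _ rfl)
    have hglb : IsGLB {y, f x} (f s) := by
      constructor
      · intro z hz
        rcases hz with rfl | hz
        · have := hanti _ _ hfys
          rwa [hinv] at this
        · rcases hz with rfl
          exact hanti _ _ hxs
      · intro z hz
        have h1 : z ≤ y := hz (Set.mem_insert _ _)
        have h2 : z ≤ f x := hz (Set.mem_insert_of_mem _ rfl)
        have hub : f z ∈ upperBounds {f y, x} := by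
          intro w hw
          rcases hw with rfl | hw
          · exact hanti _ _ h1
          · rcases hw with rfl
            have := hanti _ _ h2
            rwa [hinv] at this
        have := hanti _ _ (hs.2 hub)
        rwa [hinv] at this
    refine ⟨f s, hglb, ?_, ?_⟩
    · intro w hw
      rcases hw with rfl | hw
      · exact hxy
      · rcases hw with rfl
        exact hglb.1 (Set.mem_insert _ _)
    · intro u hu
      have key := h x y hxy
      have : u ∈ upperBounds (insert x (lowerBounds {y, f x})) := by
        intro w hw
        rcases hw with rfl | hw
        · exact hu (Set.mem_insert _ _)
        · exact le_trans (hglb.2 hw) (hu (Set.mem_insert_of_mem _ rfl))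
      rw [← key] at this
      exact this rfl
end

section
/- In a strong skew orthomodular poset, if A ⊆ P, a ∈ P, A ≤ a (every element of A is ≤ a), and L({a} ∪ A') = {0}, then a is the supremum of A. -/
/-- In a strong skew orthomodular poset, if A ≤ a and
L({a} ∪ A') = {0}, then a is the supremum of A. -/
theorem strong_skew_omp_sup {P : Type*} [PartialOrder P] [BoundedOrder P]
    (f : P → P)
    (hinv : ∀ x, f (f x) = x)
    (hanti : ∀ x y : P, x ≤ y → f y ≤ f x)
    (hinf : ∀ x : P, lowerBounds {x, f x} = {(⊥ : P)})
    (hsup : ∀ x : P, upperBounds {x, f x} = {(⊤ : P)})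
    (hsskew : ∀ (A : Set P) (y : P), y ∈ upperBounds A →
      upperBounds {y} = upperBounds (A ∪ lowerBounds (insert y (f '' A))))
    (A : Set P) (a : P) (ha : a ∈ upperBounds A)
    (h : lowerBounds (insert a (f '' A)) = {(⊥ : P)}) :
    IsLUB A a := by
  constructor
  · exact ha
  · intro b hb
    have key := hsskew A a ha
    rw [h] at key
    have hbmem : b ∈ upperBounds (A ∪ {(⊥ : P)}) := by
      intro x hx
      rcases hx with hx | hx
      · exact hb hx
      · simp at hx; simp [hx]
    rw [← key] at hbmem
    exact hbmem rfl
end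

section
/- An orthoposet satisfying the ACC is a strong skew orthomodular poset if and only if U(a) = U(A ∪ L({a} ∪ A')) for every antichain A of P and every a ∈ U(A). -/
/-- An orthoposet satisfying the ACC is strong skew orthomodular iff
U(a) = U(A ∪ L({a} ∪ A')) for every antichain A and every a ∈ U(A). -/
theorem strong_skew_iff_antichain {P : Type*} [PartialOrder P] [BoundedOrder P]
    (f : P → P)
    (hinv : ∀ x, f (f x) = x)
    (hanti : ∀ x y : P, x ≤ y → f y ≤ f x)
    (hinf : ∀ x : P, lowerBounds {x, f x} = {(⊥ : P)})
    (hsup : ∀ x : P, upperBounds {x, f x} = {(⊤ : P)})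
    (hacc : ∀ g : ℕ → P, ¬ StrictMono g) :
    (∀ (A : Set P) (y : P), y ∈ upperBounds A →
        upperBounds {y} = upperBounds (A ∪ lowerBounds (insert y (f '' A)))) ↔
    (∀ A : Set P, IsAntichain (· ≤ ·) A → ∀ a ∈ upperBounds A,
        upperBounds {a} = upperBounds (A ∪ lowerBounds (insert a (f '' A)))) := by
  constructor
  · intro h A _ a ha
    exact h A a ha
  · intro h A y hy
    -- ACC gives well-foundedness of >
    have hwf : WellFounded ((· > ·) : P → P → Prop) := by
      rw [RelEmbedding.wellFounded_iff_isEmpty]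
      refine ⟨fun g => hacc g fun m n hmn => ?_⟩
      exact g.map_rel_iff.2 hmn
    -- the set of maximal elements of A
    set M : Set P := {m | m ∈ A ∧ ∀ b ∈ A, m ≤ b → m = b} with hM
    have hmaxex : ∀ a ∈ A, ∃ m ∈ M, a ≤ m := by
      intro a ha
      obtain ⟨m, hm, hmin⟩ := hwf.has_min {x | x ∈ A ∧ a ≤ x} ⟨a, ha, le_refl a⟩
      refine ⟨m, ⟨hm.1, fun b hb hmb => ?_⟩, hm.2⟩
      by_contra hne
      exact hmin b ⟨hb, hm.2.trans hmb⟩ (lt_of_le_of_ne hmb hne)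
    have hA : IsAntichain (· ≤ ·) M := fun x hx z hz hne hle => hne (hx.2 z hz.1 hle)
    have hyM : y ∈ upperBounds M := fun m hm => hy hm.1
    have key := h M hA y hyM
    have hL : lowerBounds (insert y (f '' M)) = lowerBounds (insert y (f '' A)) := by
      apply Set.Subset.antisymm
      · intro x hx z hz
        rcases hz with hz | ⟨a, ha, rfl⟩
        · exact hz ▸ hx (Set.mem_insert _ _)
        · obtain ⟨m, hmM, ham⟩ := hmaxex a ha
          exact le_trans (hx (Set.mem_insert_of_mem _ ⟨m, hmM, rfl⟩)) (hanti _ _ ham)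
      · exact lowerBounds_mono_set (Set.insert_subset_insert (Set.image_mono (f := f)
          fun m hm => hm.1))
    have hU : upperBounds (A ∪ lowerBounds (insert y (f '' A)))
        = upperBounds (M ∪ lowerBounds (insert y (f '' M))) := by
      apply Set.Subset.antisymm
      · exact upperBounds_mono_set (Set.union_subset_union (fun m hm => hm.1) hL.le)
      · intro z hz w hw
        rcases hw with hw | hw
        · obtain ⟨m, hmM, hwm⟩ := hmaxex w hw
          exact hwm.trans (hz (Set.mem_union_left _ hmM))
        · exact hz (Set.mem_union_right _ (hL ▸ hw))
    exact key.trans hU.symm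
end

section
/- Every Boolean poset is a skew orthomodular poset. -/
/-- Every Boolean poset is a skew orthomodular poset. -/
theorem boolean_poset_is_skew_omp {P : Type*} [PartialOrder P] [BoundedOrder P]
    (f : P → P)
    (hinv : ∀ x, f (f x) = x)
    (hanti : ∀ x y : P, x ≤ y → f y ≤ f x)
    (hinf : ∀ x : P, lowerBounds {x, f x} = {(⊥ : P)})
    (hsup : ∀ x : P, upperBounds {x, f x} = {(⊤ : P)})
    (hdist : ∀ x y z : P,
      lowerBounds (upperBounds {x, y} ∪ {z}) =
        lowerBounds (upperBounds (lowerBounds {x, z} ∪ lowerBounds {y, z}))) :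
    ∀ x y : P, x ≤ y →
      upperBounds {y} = upperBounds (insert x (lowerBounds {y, f x})) := by
  intro x y hxy
  apply le_antisymm
  · -- u ∈ U(y) → u ∈ U({x} ∪ L(y, x'))
    intro u hu w hw
    have hyu : y ≤ u := hu rfl
    rcases hw with rfl | hw
    · exact hxy.trans hyu
    · exact (hw (Set.mem_insert y _)).trans hyu
  · -- u ∈ U({x} ∪ L(y, x')) → y ≤ u
    intro u hu w hw
    rcases hw with rfl
    have hd := hdist x (f x) w
    rw [hsup x] at hd
    have hwL : w ∈ lowerBounds (({⊤} : Set P) ∪ {w}) := by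
      intro a ha
      rcases ha with ha | ha
      · exact ha ▸ le_top
      · exact ha ▸ le_refl w
    rw [hd] at hwL
    apply hwL
    intro v hv
    rcases hv with hv | hv
    · exact (hv (Set.mem_insert x _)).trans (hu (Set.mem_insert x _))
    · -- v ∈ lowerBounds {f x, w}
      refine hu (Set.mem_insert_of_mem x ?_)
      intro a ha
      rcases ha with rfl | ha
      · exact hv (Set.mem_insert_of_mem _ rfl)
      · exact hv (ha ▸ Set.mem_insert _ _)
end

section
/- In an orthoposet, the sharp and flat operators are De Morgan dual: F(a,b) = (S(a',b'))' and S(a,b) = (F(a',b'))', where for a subset X, X' := {x' : x ∈ X}. -/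
/-- The sharp operator S(x,y) := U(L(x,y) ∪ L(x,y') ∪ L(x',y)). -/
def sharpOp {P : Type*} [PartialOrder P] (f : P → P) (x y : P) : Set P :=
  upperBounds (lowerBounds {x, y} ∪ lowerBounds {x, f y} ∪ lowerBounds {f x, y})

/-- The flat operator F(x,y) := L(U(x,y) ∪ U(x,y') ∪ U(x',y)). -/
def flatOp {P : Type*} [PartialOrder P] (f : P → P) (x y : P) : Set P :=
  lowerBounds (upperBounds {x, y} ∪ upperBounds {x, f y} ∪ upperBounds {f x, y})

section Aux
variable {P : Type*} [PartialOrder P] (f : P → P)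

lemma aux_le_iff (hinv : ∀ x, f (f x) = x) (hanti : ∀ x y : P, x ≤ y → f y ≤ f x) (x y : P) : f x ≤ f y ↔ y ≤ x := by
  constructor
  · intro h; have := hanti _ _ h; rwa [hinv, hinv] at this
  · exact hanti _ _

lemma aux_img_upper (hinv : ∀ x, f (f x) = x) (hanti : ∀ x y : P, x ≤ y → f y ≤ f x) (S : Set P) : f '' upperBounds S = lowerBounds (f '' S) := by
  ext z
  constructor
  · rintro ⟨u, hu, rfl⟩ w ⟨s, hs, rfl⟩
    exact hanti _ _ (hu hs)
  · intro hz
    refine ⟨f z, fun s hs => ?_, hinv z⟩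
    have := hz ⟨s, hs, rfl⟩
    rw [← hinv s]
    exact hanti _ _ this

lemma aux_img_lower (hinv : ∀ x, f (f x) = x) (hanti : ∀ x y : P, x ≤ y → f y ≤ f x) (S : Set P) : f '' lowerBounds S = upperBounds (f '' S) := by
  ext z
  constructor
  · rintro ⟨u, hu, rfl⟩ w ⟨s, hs, rfl⟩
    exact hanti _ _ (hu hs)
  · intro hz
    refine ⟨f z, fun s hs => ?_, hinv z⟩
    have := hz ⟨s, hs, rfl⟩
    rw [← hinv s]
    exact hanti _ _ this

set_option linter.unusedSectionVars false in
lemma aux_img_pair (x y : P) : f '' {x, y} = {f x, f y} := by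
  simp [Set.image_insert_eq]

end Aux

/-- F(a,b) = (S(a',b'))' and S(a,b) = (F(a',b'))'. -/
theorem sharp_flat_de_morgan {P : Type*} [PartialOrder P] [BoundedOrder P]
    (f : P → P)
    (hinv : ∀ x, f (f x) = x)
    (hanti : ∀ x y : P, x ≤ y → f y ≤ f x)
    (hinf : ∀ x : P, lowerBounds {x, f x} = {(⊥ : P)})
    (hsup : ∀ x : P, upperBounds {x, f x} = {(⊤ : P)})
    (a b : P) :
    flatOp f a b = f '' (sharpOp f (f a) (f b)) ∧
    sharpOp f a b = f '' (flatOp f (f a) (f b)) := by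
  constructor
  · rw [sharpOp, aux_img_upper f hinv hanti, Set.image_union, Set.image_union,
      aux_img_lower f hinv hanti, aux_img_lower f hinv hanti, aux_img_lower f hinv hanti,
      aux_img_pair, aux_img_pair, aux_img_pair, hinv, hinv, flatOp]
  · rw [flatOp, aux_img_lower f hinv hanti, Set.image_union, Set.image_union,
      aux_img_upper f hinv hanti, aux_img_upper f hinv hanti, aux_img_upper f hinv hanti,
      aux_img_pair, aux_img_pair, aux_img_pair, hinv, hinv, sharpOp]
end

section
/- In an orthoposet, if a ≤ b' (a and b orthogonal) then S(a,b) = U(a,b), and if a' ≤ b (a' and b' orthogonal) then F(a,b) = L(a,b). -/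
/-- If a ⊥ b then S(a,b) = U(a,b); if a' ≤ b then F(a,b) = L(a,b). -/
theorem sharp_flat_orthogonal {P : Type*} [PartialOrder P] [BoundedOrder P]
    (f : P → P)
    (hinv : ∀ x, f (f x) = x)
    (hanti : ∀ x y : P, x ≤ y → f y ≤ f x)
    (hinf : ∀ x : P, lowerBounds {x, f x} = {(⊥ : P)})
    (hsup : ∀ x : P, upperBounds {x, f x} = {(⊤ : P)})
    (a b : P) :
    (a ≤ f b → sharpOp f a b = upperBounds {a, b}) ∧
    (f a ≤ b → flatOp f a b = lowerBounds {a, b}) := by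
  constructor
  · intro h
    have hba : b ≤ f a := by
      have := hanti _ _ h
      rwa [hinv] at this
    ext u
    constructor
    · intro hu
      have ha : a ∈ lowerBounds {a, f b} := by
        intro z hz
        rcases hz with rfl | hz
        · exact le_rfl
        · simp_all
      have hb : b ∈ lowerBounds {f a, b} := by
        intro z hz
        rcases hz with rfl | hz
        · exact hba
        · simp_all
      intro z hz
      rcases hz with rfl | hz
      · exact hu (Or.inl (Or.inr ha))
      · simp only [Set.mem_singleton_iff] at hz
        subst hz
        exact hu (Or.inr hb)
    · intro hu z hz
      have hua : a ≤ u := hu (by simp)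
      have hub : b ≤ u := hu (by simp)
      rcases hz with (hz | hz) | hz
      · exact le_trans (hz (by simp)) hua
      · exact le_trans (hz (by simp)) hua
      · exact le_trans (hz (by simp)) hub
  · intro h
    have hba : f b ≤ a := by
      have := hanti _ _ h
      rwa [hinv] at this
    ext u
    constructor
    · intro hu
      have ha : a ∈ upperBounds {a, f b} := by
        intro z hz
        rcases hz with rfl | hz
        · exact le_rfl
        · simp_all
      have hb : b ∈ upperBounds {f a, b} := by
        intro z hz
        rcases hz with rfl | hz
        · exact h
        · simp_all
      intro z hz
      rcases hz with rfl | hz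
      · exact hu (Or.inl (Or.inr ha))
      · simp only [Set.mem_singleton_iff] at hz
        subst hz
        exact hu (Or.inr hb)
    · intro hu z hz
      have hua : u ≤ a := hu (by simp)
      have hub : u ≤ b := hu (by simp)
      rcases hz with (hz | hz) | hz
      · exact le_trans hua (hz (by simp))
      · exact le_trans hua (hz (by simp))
      · exact le_trans hub (hz (by simp))
end

section
/- In an orthoposet, if a C b and b C a then S(a,b) = U(a,b), where a C b means U(a) = U(L(a,b) ∪ L(a,b')). -/
/-- The compatibility relation: a C b iff U(a) = U(L(a,b) ∪ L(a,b')). -/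
def compatRel {P : Type*} [PartialOrder P] (f : P → P) (a b : P) : Prop :=
  upperBounds {a} = upperBounds (lowerBounds {a, b} ∪ lowerBounds {a, f b})

/-- If a C b and b C a then S(a,b) = U(a,b). -/
theorem sharp_of_compatible {P : Type*} [PartialOrder P] [BoundedOrder P]
    (f : P → P)
    (hinv : ∀ x, f (f x) = x)
    (hanti : ∀ x y : P, x ≤ y → f y ≤ f x)
    (hinf : ∀ x : P, lowerBounds {x, f x} = {(⊥ : P)})
    (hsup : ∀ x : P, upperBounds {x, f x} = {(⊤ : P)})
    (a b : P) (hab : compatRel f a b) (hba : compatRel f b a) :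
    sharpOp f a b = upperBounds {a, b} := by
  unfold compatRel at hab hba
  have hU : upperBounds ({a, b} : Set P) = upperBounds {a} ∩ upperBounds {b} := by
    rw [show ({a, b} : Set P) = {a} ∪ {b} from rfl, upperBounds_union]
  rw [sharpOp, hU, hab, hba]
  simp only [upperBounds_union, Set.pair_comm b a, Set.pair_comm b (f a)]
  ext x
  simp only [Set.mem_inter_iff]
  tauto
end

section
/- In an orthoposet, if a C b and a' C b' then the commutator c(a,b) = U(∅) = {1} (i.e., c(a,b) equals the whole-set condition value 1). -/
/-- The commutator c(a,b) := U(L(a,b) ∪ L(a,b') ∪ L(a',b) ∪ L(a',b')). -/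
def commOp {P : Type*} [PartialOrder P] (f : P → P) (a b : P) : Set P :=
  upperBounds (lowerBounds {a, b} ∪ lowerBounds {a, f b} ∪ lowerBounds {f a, b} ∪
    lowerBounds {f a, f b})

/-- If a C b and a' C b' then c(a,b) = {1}. -/
theorem commutator_of_compatible {P : Type*} [PartialOrder P] [BoundedOrder P]
    (f : P → P)
    (hinv : ∀ x, f (f x) = x)
    (hanti : ∀ x y : P, x ≤ y → f y ≤ f x)
    (hinf : ∀ x : P, lowerBounds {x, f x} = {(⊥ : P)})
    (hsup : ∀ x : P, upperBounds {x, f x} = {(⊤ : P)})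
    (a b : P) (h1 : compatRel f a b) (h2 : compatRel f (f a) (f b)) :
    commOp f a b = {(⊤ : P)} := by
  unfold commOp
  unfold compatRel at h1 h2
  rw [hinv b] at h2
  have key : lowerBounds {a, b} ∪ lowerBounds {a, f b} ∪ lowerBounds {f a, b} ∪
      lowerBounds {f a, f b} =
      (lowerBounds {a, b} ∪ lowerBounds {a, f b}) ∪
      (lowerBounds {f a, f b} ∪ lowerBounds {f a, b}) := by
    rw [Set.union_assoc, Set.union_comm (lowerBounds {f a, b})]
  rw [key, upperBounds_union, ← h1, ← h2, ← upperBounds_union,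
    show ({a} : Set P) ∪ {f a} = {a, f a} from rfl, hsup a]
end

section
/- In a skew orthomodular poset, if a ≤ b then S(a,b) = U(b), F(a,b) = L(a), and c(a,b) = {1}. -/
/-- In a skew orthomodular poset, if a ≤ b then S(a,b) = U(b),
F(a,b) = L(a), and c(a,b) = {1}. -/
theorem skew_omp_sharp_flat_comm {P : Type*} [PartialOrder P] [BoundedOrder P]
    (f : P → P)
    (hinv : ∀ x, f (f x) = x)
    (hanti : ∀ x y : P, x ≤ y → f y ≤ f x)
    (hinf : ∀ x : P, lowerBounds {x, f x} = {(⊥ : P)})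
    (hsup : ∀ x : P, upperBounds {x, f x} = {(⊤ : P)})
    (hskew : ∀ x y : P, x ≤ y →
      upperBounds {y} = upperBounds (insert x (lowerBounds {y, f x})))
    (a b : P) (hab : a ≤ b) :
    sharpOp f a b = upperBounds {b} ∧
    flatOp f a b = lowerBounds {a} ∧
    commOp f a b = {(⊤ : P)} := by
  have hfle : ∀ x y : P, f x ≤ f y ↔ y ≤ x := by
    intro x y
    constructor
    · intro h; have := hanti _ _ h; rwa [hinv, hinv] at this
    · exact fun h => hanti _ _ h
  have hfb : f b ≤ f a := hanti a b hab
  -- L{a,b} = Iic a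
  have hLab : lowerBounds ({a, b} : Set P) = Set.Iic a := by
    rw [lowerBounds_insert, lowerBounds_singleton]
    ext z
    exact ⟨fun h => h.1, fun h => ⟨h, le_trans h hab⟩⟩
  -- L{a, f b} = {⊥}
  have hLbot : lowerBounds ({a, f b} : Set P) = {(⊥ : P)} := by
    ext z
    constructor
    · intro h
      have h1 : z ≤ a := h (Set.mem_insert _ _)
      have h2 : z ≤ f b := h (Set.mem_insert_of_mem _ rfl)
      have : z ∈ lowerBounds ({b, f b} : Set P) := by
        intro w hw
        rcases hw with rfl | hw
        · exact le_trans h1 hab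
        · simp only [Set.mem_singleton_iff] at hw; subst hw; exact h2
      rwa [hinf b] at this
    · intro h
      simp only [Set.mem_singleton_iff] at h; subst h
      intro w _; exact bot_le
  -- U{f a, b} = {⊤}
  have hUtop : upperBounds ({f a, b} : Set P) = {(⊤ : P)} := by
    ext z
    constructor
    · intro h
      have h1 : f a ≤ z := h (Set.mem_insert _ _)
      have h2 : b ≤ z := h (Set.mem_insert_of_mem _ rfl)
      have : z ∈ upperBounds ({b, f b} : Set P) := by
        intro w hw
        rcases hw with rfl | hw
        · exact h2
        · simp only [Set.mem_singleton_iff] at hw; subst hw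
          exact le_trans hfb h1
      rwa [hsup b] at this
    · intro h
      simp only [Set.mem_singleton_iff] at h; subst h
      intro w _; exact le_top
  -- L{f a, f b} = Iic (f b)
  have hLff : lowerBounds ({f a, f b} : Set P) = Set.Iic (f b) := by
    rw [lowerBounds_insert, lowerBounds_singleton]
    ext z
    exact ⟨fun h => h.2, fun h => ⟨le_trans h hfb, h⟩⟩
  have hskew1 := hskew a b hab
  rw [upperBounds_insert, Set.pair_comm b (f a)] at hskew1
  -- hskew1 : upperBounds {b} = Set.Ici a ∩ upperBounds (lowerBounds {f a, b})
  have hS : sharpOp f a b = upperBounds {b} := by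
    unfold sharpOp
    rw [upperBounds_union, upperBounds_union, hLab, hLbot, upperBounds_Iic,
      upperBounds_singleton, hskew1]
    ext z
    simp only [Set.mem_inter_iff, Set.mem_Ici]
    constructor
    · rintro ⟨⟨h1, _⟩, h3⟩; exact ⟨h1, h3⟩
    · rintro ⟨h1, h3⟩; exact ⟨⟨h1, bot_le⟩, h3⟩
  refine ⟨hS, ?_, ?_⟩
  · -- F(a,b) = L(a)
    have hskew2 := hskew (f b) (f a) hfb
    rw [hinv, upperBounds_insert] at hskew2
    -- hskew2 : upperBounds {f a} = Set.Ici (f b) ∩ upperBounds (lowerBounds {f a, b})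
    unfold flatOp
    rw [lowerBounds_union, lowerBounds_union, hUtop, lowerBounds_singleton]
    ext z
    simp only [Set.mem_inter_iff, Set.mem_Iic, lowerBounds_singleton]
    constructor
    · rintro ⟨⟨h1, h2⟩, _⟩
      -- h1 : z ∈ lowerBounds (upperBounds {a, b}), h2 : z ∈ lowerBounds (upperBounds {a, f b})
      -- show z ≤ a, i.e. f a ≤ f z
      suffices hkey : f a ≤ f z by
        have := hanti _ _ hkey; rwa [hinv, hinv] at this
      have hz1 : f z ∈ Set.Ici (f b) := by
        have hzb : z ≤ b := h1 (by
          intro w hw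
          rcases hw with rfl | hw
          · exact hab
          · simp only [Set.mem_singleton_iff] at hw; subst hw; exact le_rfl)
        simp only [Set.mem_Ici]
        exact (hfle b z).mpr hzb
      have hz2 : f z ∈ upperBounds (lowerBounds ({f a, b} : Set P)) := by
        intro w hw
        rw [← hinv w, hfle]
        apply h2
        intro u hu
        rcases hu with rfl | hu
        · rw [← hinv u, hfle]; exact hw (Set.mem_insert _ _)
        · simp only [Set.mem_singleton_iff] at hu; subst hu
          rw [hfle]; exact hw (Set.mem_insert_of_mem _ rfl)
      have hmem : f z ∈ upperBounds ({f a} : Set P) := by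
        rw [hskew2]; exact ⟨hz1, hz2⟩
      exact hmem rfl
    · intro hza
      refine ⟨⟨?_, ?_⟩, le_top⟩
      · intro u hu
        exact le_trans hza (hu (Set.mem_insert _ _))
      · intro u hu
        exact le_trans hza (hu (Set.mem_insert _ _))
  · -- c(a,b) = {⊤}
    unfold commOp
    rw [upperBounds_union, upperBounds_union, upperBounds_union, hLab, hLbot,
      hLff, upperBounds_Iic, upperBounds_Iic]
    have hSk : Set.Ici a ∩ upperBounds (lowerBounds ({f a, b} : Set P)) = Set.Ici b := by
      rw [← hskew1, upperBounds_singleton]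
    ext z
    simp only [Set.mem_inter_iff, Set.mem_Ici, Set.mem_singleton_iff]
    constructor
    · rintro ⟨⟨⟨h1, _⟩, h3⟩, h4⟩
      have hzb : b ≤ z := by
        have : z ∈ Set.Ici a ∩ upperBounds (lowerBounds ({f a, b} : Set P)) := ⟨h1, h3⟩
        rw [hSk] at this; exact this
      have : z ∈ upperBounds ({b, f b} : Set P) := by
        intro w hw
        rcases hw with rfl | hw
        · exact hzb
        · simp only [Set.mem_singleton_iff] at hw; subst hw; exact h4
      rwa [hsup b] at this
    · rintro rfl
      exact ⟨⟨⟨le_top, fun w _ => le_top⟩, fun w _ => le_top⟩, le_top⟩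
end

section
/- In a strong skew orthomodular poset, for all a, b the following are equivalent: (i) a C b; (ii) b C a; (iii) c(a,b) = {1}. -/
set_option linter.unusedSectionVars false

section Aux

variable {P : Type*} [PartialOrder P] [BoundedOrder P] {f : P → P}

lemma myflip (hinv : ∀ x, f (f x) = x) (hanti : ∀ x y : P, x ≤ y → f y ≤ f x)
    {z w : P} (h : z ≤ f w) : w ≤ f z := by
  have h2 := hanti _ _ h
  rwa [hinv] at h2

lemma mycomm (hinv : ∀ x, f (f x) = x) (hanti : ∀ x y : P, x ≤ y → f y ≤ f x)
    (hsskew : ∀ (A : Set P) (y : P), y ∈ upperBounds A →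
      upperBounds {y} = upperBounds (A ∪ lowerBounds (insert y (f '' A))))
    {a b : P} (h : compatRel f a b) : compatRel f b a := by
  unfold compatRel at h ⊢
  have hb : b ∈ upperBounds (lowerBounds {b, a} ∪ lowerBounds {b, f a}) := by
    rintro w (hw | hw) <;> exact hw (Set.mem_insert _ _)
  rw [hsskew _ b hb]
  ext t
  constructor
  · intro ht w hw
    exact ht (Or.inl hw)
  · intro ht
    rintro w (hw | hw)
    · exact ht hw
    · have hzb : w ≤ b := hw (Set.mem_insert _ _)
      have hzf : ∀ u ∈ (lowerBounds {b, a} ∪ lowerBounds {b, f a} : Set P), w ≤ f u :=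
        fun u hu => hw (Set.mem_insert_of_mem _ ⟨u, hu, rfl⟩)
      have hfz : f w ∈ upperBounds (lowerBounds {a, b} ∪ lowerBounds {a, f b}) := by
        rintro u (hu | hu)
        · have hu' : u ∈ lowerBounds ({b, a} : Set P) := by
            rw [Set.pair_comm b a]; exact hu
          exact myflip hinv hanti (hzf u (Or.inl hu'))
        · have hub : u ≤ f b := hu (Set.mem_insert_of_mem _ rfl)
          have hbu : b ≤ f u := myflip hinv hanti hub
          exact myflip hinv hanti (le_trans hzb hbu)
      rw [← h] at hfz
      have haw : a ≤ f w := hfz rfl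
      have hwa : w ≤ f a := by
        have h2 := hanti _ _ haw; rwa [hinv] at h2
      have hwB : w ∈ lowerBounds ({b, f a} : Set P) := by
        rintro x (rfl | hx)
        · exact hzb
        · rw [Set.mem_singleton_iff] at hx
          rw [hx]; exact hwa
      exact ht (Or.inr hwB)

lemma compat_iff (hinv : ∀ x, f (f x) = x) (hanti : ∀ x y : P, x ≤ y → f y ≤ f x)
    (hinf : ∀ x : P, lowerBounds {x, f x} = {(⊥ : P)})
    (hsup : ∀ x : P, upperBounds {x, f x} = {(⊤ : P)})
    (hsskew : ∀ (A : Set P) (y : P), y ∈ upperBounds A →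
      upperBounds {y} = upperBounds (A ∪ lowerBounds (insert y (f '' A))))
    (a b : P) : compatRel f a b ↔ commOp f a b = {(⊤ : P)} := by
  constructor
  · intro h
    have h2 : compatRel f b a := mycomm hinv hanti hsskew h
    have h3 : compatRel f b (f a) := by
      unfold compatRel at h2 ⊢
      rw [hinv, Set.union_comm]
      exact h2
    have h4 : compatRel f (f a) b := mycomm hinv hanti hsskew h3
    unfold compatRel at h h4
    unfold commOp
    ext t
    simp only [Set.mem_singleton_iff]
    constructor
    · intro ht
      have ht1 : t ∈ upperBounds (lowerBounds {a, b} ∪ lowerBounds {a, f b}) := by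
        rintro w (hw | hw)
        · exact ht (Or.inl (Or.inl (Or.inl hw)))
        · exact ht (Or.inl (Or.inl (Or.inr hw)))
      have ht2 : t ∈ upperBounds (lowerBounds {f a, b} ∪ lowerBounds {f a, f b}) := by
        rintro w (hw | hw)
        · exact ht (Or.inl (Or.inr hw))
        · exact ht (Or.inr hw)
      rw [← h] at ht1
      rw [← h4] at ht2
      have hat : a ≤ t := ht1 rfl
      have hfat : f a ≤ t := ht2 rfl
      have htop : t ∈ upperBounds ({a, f a} : Set P) := by
        rintro x (rfl | hx)
        · exact hat
        · rw [Set.mem_singleton_iff] at hx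
          rw [hx]; exact hfat
      rw [hsup] at htop
      exact htop
    · rintro rfl
      intro w _
      exact le_top
  · intro hc
    unfold compatRel
    have ha : a ∈ upperBounds (lowerBounds {a, b} ∪ lowerBounds {a, f b}) := by
      rintro w (hw | hw) <;> exact hw (Set.mem_insert _ _)
    rw [hsskew _ a ha]
    ext t
    constructor
    · intro ht w hw
      exact ht (Or.inl hw)
    · intro ht
      rintro w (hw | hw)
      · exact ht hw
      · have hwa : w ≤ a := hw (Set.mem_insert _ _)
        have hwf : ∀ u ∈ (lowerBounds {a, b} ∪ lowerBounds {a, f b} : Set P), w ≤ f u :=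
          fun u hu => hw (Set.mem_insert_of_mem _ ⟨u, hu, rfl⟩)
        have hfw : f w ∈ commOp f a b := by
          unfold commOp
          rintro u (((hu | hu) | hu) | hu)
          · exact myflip hinv hanti (hwf u (Or.inl hu))
          · exact myflip hinv hanti (hwf u (Or.inr hu))
          · have hufa : u ≤ f a := hu (Set.mem_insert _ _)
            have hau : a ≤ f u := myflip hinv hanti hufa
            exact myflip hinv hanti (le_trans hwa hau)
          · have hufa : u ≤ f a := hu (Set.mem_insert _ _)
            have hau : a ≤ f u := myflip hinv hanti hufa
            exact myflip hinv hanti (le_trans hwa hau)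
        rw [hc, Set.mem_singleton_iff] at hfw
        have hwbot : w = ⊥ := by
          have h5 : w = f (f w) := (hinv w).symm
          rw [hfw] at h5
          have h6 : f ⊤ ∈ lowerBounds ({⊤, f ⊤} : Set P) := by
            rintro x (rfl | hx)
            · exact le_top
            · rw [Set.mem_singleton_iff] at hx
              rw [hx]
          rw [hinf, Set.mem_singleton_iff] at h6
          rw [h5, h6]
        rw [hwbot]
        exact bot_le

end Aux

/-- In a strong skew orthomodular poset:
a C b ↔ b C a ↔ c(a,b) = {1}. -/
theorem strong_skew_compat_tfae {P : Type*} [PartialOrder P] [BoundedOrder P]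
    (f : P → P)
    (hinv : ∀ x, f (f x) = x)
    (hanti : ∀ x y : P, x ≤ y → f y ≤ f x)
    (hinf : ∀ x : P, lowerBounds {x, f x} = {(⊥ : P)})
    (hsup : ∀ x : P, upperBounds {x, f x} = {(⊤ : P)})
    (hsskew : ∀ (A : Set P) (y : P), y ∈ upperBounds A →
      upperBounds {y} = upperBounds (A ∪ lowerBounds (insert y (f '' A))))
    (a b : P) :
    (compatRel f a b ↔ compatRel f b a) ∧
    (compatRel f a b ↔ commOp f a b = {(⊤ : P)}) := by
  exact ⟨⟨fun h => mycomm hinv hanti hsskew h, fun h => mycomm hinv hanti hsskew h⟩,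
    compat_iff hinv hanti hinf hsup hsskew a b⟩
end

section
/- Every orthoposet in which the compatibility relation C is symmetric is a skew orthomodular poset. -/
/-- Every orthoposet with symmetric compatibility relation is
skew orthomodular. -/
theorem symmetric_compat_implies_skew {P : Type*} [PartialOrder P] [BoundedOrder P]
    (f : P → P)
    (hinv : ∀ x, f (f x) = x)
    (hanti : ∀ x y : P, x ≤ y → f y ≤ f x)
    (hinf : ∀ x : P, lowerBounds {x, f x} = {(⊥ : P)})
    (hsup : ∀ x : P, upperBounds {x, f x} = {(⊤ : P)})
    (hsymm : ∀ a b : P, compatRel f a b → compatRel f b a) :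
    ∀ x y : P, x ≤ y →
      upperBounds {y} = upperBounds (insert x (lowerBounds {y, f x})) := by
  intro x y hxy
  -- Step 1: x C y
  have hxCy : compatRel f x y := by
    unfold compatRel
    have h1 : lowerBounds ({x, y} : Set P) = Set.Iic x := by
      ext z
      constructor
      · intro hz
        exact hz (by simp : x ∈ ({x, y} : Set P))
      · intro hz w hw
        rcases hw with rfl | hw
        · exact hz
        · simp only [Set.mem_singleton_iff] at hw
          subst hw
          exact le_trans hz hxy
    have h2 : lowerBounds ({x, f y} : Set P) = {(⊥ : P)} := by
      ext z
      constructor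
      · intro hz
        have hzx : z ≤ x := hz (by simp)
        have hzfy : z ≤ f y := hz (by simp)
        have hzfx : z ≤ f x := le_trans hzfy (hanti x y hxy)
        have : z ∈ lowerBounds ({x, f x} : Set P) := by
          intro w hw
          rcases hw with rfl | hw
          · exact hzx
          · simp only [Set.mem_singleton_iff] at hw; subst hw; exact hzfx
        rw [hinf x] at this
        exact this
      · intro hz
        simp only [Set.mem_singleton_iff] at hz
        subst hz
        intro w _
        exact bot_le
    rw [h1, h2]
    have h3 : (Set.Iic x ∪ {(⊥ : P)}) = Set.Iic x := by
      apply Set.union_eq_self_of_subset_right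
      intro z hz
      simp only [Set.mem_singleton_iff] at hz
      subst hz; exact bot_le
    rw [h3, upperBounds_Iic, upperBounds_singleton]
  -- Step 2: y C x
  have hyCx := hsymm x y hxCy
  unfold compatRel at hyCx
  rw [hyCx]
  -- Now rewrite both sides
  have h4 : lowerBounds ({y, x} : Set P) = Set.Iic x := by
    ext z
    constructor
    · intro hz
      exact hz (by simp : x ∈ ({y, x} : Set P))
    · intro hz w hw
      rcases hw with rfl | hw
      · exact le_trans hz hxy
      · simp only [Set.mem_singleton_iff] at hw; subst hw; exact hz
  rw [h4, upperBounds_union, upperBounds_Iic, upperBounds_insert]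
end

section
/- In an orthoposet satisfying the ACC and the two conditions (1) L(U(L(x,y) ∪ {y'}) ∪ {y}) ⊆ L(x) and (2) U(L(U(x,y) ∪ {y'}) ∪ {y}) ⊆ U(x) for all x, y, the operators a ⊙ b := Max L({b} ∪ U(a,b')) and b → c := Min U({b'} ∪ L(b,c)) form an adjoint pair: a ⊙ b ≤ c (every element of a ⊙ b is ≤ c) if and only if a ≤ b → c (a is ≤ every element of b → c). -/
/-- The set of maximal elements of A. -/
def maxElems {P : Type*} [PartialOrder P] (A : Set P) : Set P :=
  {a | a ∈ A ∧ ∀ b ∈ A, ¬ a < b}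

/-- The set of minimal elements of A. -/
def minElems {P : Type*} [PartialOrder P] (A : Set P) : Set P :=
  {a | a ∈ A ∧ ∀ b ∈ A, ¬ b < a}

section Aux

variable {P : Type*} [PartialOrder P]

lemma exists_max_above (hacc : ∀ g : ℕ → P, ¬ StrictMono g) (S : Set P) {s : P} (hs : s ∈ S) :
    ∃ m ∈ maxElems S, s ≤ m := by
  by_contra h
  push_neg at h
  have key : ∀ t : {t : P // t ∈ S ∧ s ≤ t}, ∃ u : {t : P // t ∈ S ∧ s ≤ t}, t.1 < u.1 := by
    rintro ⟨t, htS, hst⟩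
    have hm : t ∉ maxElems S := fun hm => h t hm hst
    have hex : ∃ u ∈ S, t < u := by
      by_contra hc
      push_neg at hc
      exact hm ⟨htS, hc⟩
    obtain ⟨u, huS, htu⟩ := hex
    exact ⟨⟨u, huS, hst.trans htu.le⟩, htu⟩
  choose next hnext using key
  have : StrictMono (fun n => ((next^[n] ⟨s, hs, le_refl s⟩ : {t : P // t ∈ S ∧ s ≤ t})).1) := by
    apply strictMono_nat_of_lt_succ
    intro n
    simpa [Function.iterate_succ_apply'] using hnext (next^[n] ⟨s, hs, le_refl s⟩)
  exact hacc _ this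

lemma exists_min_below (hdcc : ∀ g : ℕ → P, ¬ StrictAnti g) (S : Set P) {s : P} (hs : s ∈ S) :
    ∃ m ∈ minElems S, m ≤ s := by
  by_contra h
  push_neg at h
  have key : ∀ t : {t : P // t ∈ S ∧ t ≤ s}, ∃ u : {t : P // t ∈ S ∧ t ≤ s}, u.1 < t.1 := by
    rintro ⟨t, htS, hst⟩
    have hm : t ∉ minElems S := fun hm => h t hm hst
    have hex : ∃ u ∈ S, u < t := by
      by_contra hc
      push_neg at hc
      exact hm ⟨htS, hc⟩
    obtain ⟨u, huS, htu⟩ := hex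
    exact ⟨⟨u, huS, htu.le.trans hst⟩, htu⟩
  choose next hnext using key
  have : StrictAnti (fun n => ((next^[n] ⟨s, hs, le_refl s⟩ : {t : P // t ∈ S ∧ t ≤ s})).1) := by
    apply strictAnti_nat_of_succ_lt
    intro n
    simpa [Function.iterate_succ_apply'] using hnext (next^[n] ⟨s, hs, le_refl s⟩)
  exact hdcc _ this

end Aux

/-- In an orthoposet satisfying the ACC and conditions (1) and (2),
the sharp conjunction and sharp implication form an adjoint pair. -/
theorem sharp_conjunction_implication_adjoint {P : Type*} [PartialOrder P] [BoundedOrder P]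
    (f : P → P)
    (hinv : ∀ x, f (f x) = x)
    (hanti : ∀ x y : P, x ≤ y → f y ≤ f x)
    (hinf : ∀ x : P, lowerBounds {x, f x} = {(⊥ : P)})
    (hsup : ∀ x : P, upperBounds {x, f x} = {(⊤ : P)})
    (hacc : ∀ g : ℕ → P, ¬ StrictMono g)
    (h1 : ∀ x y : P,
      lowerBounds (upperBounds (lowerBounds {x, y} ∪ {f y}) ∪ {y}) ⊆ lowerBounds {x})
    (h2 : ∀ x y : P,
      upperBounds (lowerBounds (upperBounds {x, y} ∪ {f y}) ∪ {y}) ⊆ upperBounds {x})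
    (a b c : P) :
    (∀ x ∈ maxElems (lowerBounds (insert b (upperBounds {a, f b}))), x ≤ c) ↔
    (∀ y ∈ minElems (upperBounds (insert (f b) (lowerBounds {b, c}))), a ≤ y) := by
  classical
  set A := lowerBounds (insert b (upperBounds {a, f b})) with hAdef
  set B := upperBounds (insert (f b) (lowerBounds {b, c})) with hBdef
  have fstrict : ∀ {x y : P}, x < y → f y < f x := by
    intro x y hxy
    refine lt_of_le_of_ne (hanti _ _ hxy.le) ?_
    intro he
    have h' := congrArg f he
    rw [hinv, hinv] at h'
    exact hxy.ne' h'
  have hdcc : ∀ g : ℕ → P, ¬ StrictAnti g := fun g hg =>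
    hacc (fun n => f (g n)) (fun m n hmn => fstrict (hg hmn))
  have maxiff : (∀ x ∈ maxElems A, x ≤ c) ↔ ∀ x ∈ A, x ≤ c := by
    constructor
    · intro h x hx
      obtain ⟨m, hm, hxm⟩ := exists_max_above hacc A hx
      exact hxm.trans (h m hm)
    · intro h x hx; exact h x hx.1
  have miniff : (∀ y ∈ minElems B, a ≤ y) ↔ ∀ y ∈ B, a ≤ y := by
    constructor
    · intro h y hy
      obtain ⟨m, hm, hmy⟩ := exists_min_below hdcc B hy
      exact (h m hm).trans hmy
    · intro h y hy; exact h y hy.1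
  rw [maxiff, miniff]
  constructor
  · intro h u hu
    -- u ∈ B; show a ≤ u using condition (2)
    have hsub : A ⊆ lowerBounds {b, c} := by
      intro s hsA z hz
      rcases Set.mem_insert_iff.mp hz with rfl | hz
      · exact hsA (Set.mem_insert _ _)
      · rw [Set.mem_singleton_iff.mp hz]
        exact h s hsA
    have h2' := h2 a (f b)
    rw [hinv] at h2'
    have hAeq : lowerBounds (upperBounds {a, f b} ∪ {b}) = A := by
      have he : upperBounds {a, f b} ∪ {b} = insert b (upperBounds {a, f b}) := by
        ext z; simp only [Set.mem_union, Set.mem_insert_iff, Set.mem_singleton_iff]; tauto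
      rw [hAdef, he]
    rw [hAeq] at h2'
    have hu' : u ∈ upperBounds (A ∪ {f b}) := by
      intro z hz
      rcases hz with hz | hz
      · exact hu (Set.mem_insert_of_mem _ (hsub hz))
      · rw [Set.mem_singleton_iff.mp hz]
        exact hu (Set.mem_insert _ _)
    exact h2' hu' rfl
  · intro h s hs
    -- s ∈ A; show s ≤ c using condition (1)
    have hsub : B ⊆ upperBounds {a, f b} := by
      intro u huB z hz
      rcases Set.mem_insert_iff.mp hz with rfl | hz
      · exact h u huB
      · rw [Set.mem_singleton_iff.mp hz]
        exact huB (Set.mem_insert _ _)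
    have h1' := h1 c b
    have hBeq : upperBounds (lowerBounds {c, b} ∪ {f b}) = B := by
      have he : lowerBounds {c, b} ∪ {f b} = insert (f b) (lowerBounds {b, c}) := by
        rw [Set.pair_comm c b]
        ext z; simp only [Set.mem_union, Set.mem_insert_iff, Set.mem_singleton_iff]; tauto
      rw [hBdef, he]
    rw [hBeq] at h1'
    have hs' : s ∈ lowerBounds (B ∪ {b}) := by
      intro z hz
      rcases hz with hz | hz
      · exact hs (Set.mem_insert_of_mem _ (hsub hz))
      · rw [Set.mem_singleton_iff.mp hz]
        exact hs (Set.mem_insert _ _)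
    exact h1' hs' rfl
end
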